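/- Let ⟨C_α : α < ω₁⟩ be a C-sequence, and for α ≤ β define e_β(α) = ρ₁(α,β). Then ⟨e_β : β < ω₁⟩ is a coherent sequence of finite-to-one functions: each e_β : β → ω is finite-to-one, and for all β ≤ β' < ω₁ the set {ξ < β : e_β(ξ) ≠ e_{β'}(ξ)} is finite. -/

import Mathlib

/-- The first uncountable ordinal. -/
noncomputable def omega1 : Ordinal := (Cardinal.aleph 1).ord

section Aux

variable (C : Ordinal → Set Ordinal)
    (hC : ∀ β : Ordinal, 0 < β → β < omega1 →
      C β ⊆ Set.Iio β ∧ (0 : Ordinal) ∈ C β ∧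
      (∀ γ < β, ∃ x ∈ C β, γ ≤ x) ∧ (∀ γ < β, (C β ∩ Set.Iio γ).Finite))
    (ρ : Ordinal → Ordinal → ℕ)
    (hρ0 : ∀ α : Ordinal, ρ α α = 0)
    (hρrec : ∀ α β : Ordinal, α < β → β < omega1 →
      ρ α β = max (C β ∩ Set.Iio α).ncard (ρ α (sInf (C β \ Set.Iio α))))

include hC hρrec in
lemma aux_step {δ ξ : Ordinal} (hδ : δ < omega1) (hξ : ξ < δ) :
    ∃ c, c ∈ C δ ∧ ξ ≤ c ∧ c < δ ∧ C δ ∩ Set.Iio ξ = C δ ∩ Set.Iio c ∧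
      c = sInf (C δ \ Set.Iio ξ) ∧
      ρ ξ δ = max (C δ ∩ Set.Iio c).ncard (ρ ξ c) := by
  have hδ0 : 0 < δ := lt_of_le_of_lt (zero_le : (0 : Ordinal) ≤ ξ) hξ
  obtain ⟨hsub, h0, hcof, hfin⟩ := hC δ hδ0 hδ
  have hne : (C δ \ Set.Iio ξ).Nonempty := by
    obtain ⟨x, hx, hxξ⟩ := hcof ξ hξ
    exact ⟨x, hx, not_lt.2 hxξ⟩
  set c := sInf (C δ \ Set.Iio ξ) with hcdef
  have hc : c ∈ C δ \ Set.Iio ξ := csInf_mem hne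
  have hξc : ξ ≤ c := not_lt.1 hc.2
  have hcδ : c < δ := hsub hc.1
  have hsets : C δ ∩ Set.Iio ξ = C δ ∩ Set.Iio c := by
    ext x
    constructor
    · rintro ⟨hx1, hx2⟩
      exact ⟨hx1, lt_of_lt_of_le hx2 hξc⟩
    · rintro ⟨hx1, hx2⟩
      refine ⟨hx1, ?_⟩
      by_contra h
      exact absurd (csInf_le (OrderBot.bddBelow _) (show x ∈ C δ \ Set.Iio ξ from ⟨hx1, h⟩)) (not_le.2 hx2)
  refine ⟨c, hc.1, hξc, hcδ, hsets, rfl, ?_⟩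
  rw [hρrec ξ δ hξ hδ, hsets, ← hcdef]

include hC hρrec in
lemma aux_fin : ∀ β : Ordinal, β < omega1 → ∀ n : ℕ,
    {ξ | ξ < β ∧ ρ ξ β ≤ n}.Finite := by
  intro β
  induction β using Ordinal.induction with
  | h β IH =>
    intro hβ n
    rcases eq_or_lt_of_le (zero_le : (0 : Ordinal) ≤ β) with h0 | h0
    · convert Set.finite_empty using 1
      ext ξ; simp only [Set.mem_setOf_eq, Set.mem_empty_iff_false, iff_false, not_and]
      intro h; exact absurd h (by simp [← h0, not_lt_zero])
    obtain ⟨hsub, hzero, hcof, hfin⟩ := hC β h0 hβ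
    set F := {c ∈ C β | (C β ∩ Set.Iio c).ncard ≤ n} with hF
    have hFfin : F.Finite := by
      have hinj : Set.InjOn (fun c => (C β ∩ Set.Iio c).ncard) F := by
        intro c hc c' hc' hcc
        simp only at hcc
        by_contra hne
        rcases lt_or_gt_of_ne hne with h | h
        · have : (C β ∩ Set.Iio c).ncard < (C β ∩ Set.Iio c').ncard := by
            apply Set.ncard_lt_ncard
            · constructor
              · exact Set.inter_subset_inter_right _ (Set.Iio_subset_Iio h.le)
              · intro hss
                exact absurd (hss ⟨hc.1, h⟩).2 (lt_irrefl c)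
            · exact hfin c' (hsub hc'.1)
          omega
        · have : (C β ∩ Set.Iio c').ncard < (C β ∩ Set.Iio c).ncard := by
            apply Set.ncard_lt_ncard
            · constructor
              · exact Set.inter_subset_inter_right _ (Set.Iio_subset_Iio h.le)
              · intro hss
                exact absurd (hss ⟨hc'.1, h⟩).2 (lt_irrefl c')
            · exact hfin c (hsub hc.1)
          omega
      apply Set.Finite.of_finite_image _ hinj
      apply Set.Finite.subset (Set.finite_Iic n)
      rintro - ⟨c, hc, rfl⟩
      exact hc.2
    have hcover : {ξ | ξ < β ∧ ρ ξ β ≤ n} ⊆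
        F ∪ ⋃ c ∈ F, {ξ | ξ < c ∧ ρ ξ c ≤ n} := by
      rintro ξ ⟨hξβ, hρξ⟩
      obtain ⟨c, hcC, hξc, hcβ, hsets, -, hρeq⟩ := aux_step C hC ρ hρrec hβ hξβ
      rw [hρeq] at hρξ
      have hcF : c ∈ F := ⟨hcC, le_trans (le_max_left _ _) hρξ⟩
      rcases eq_or_lt_of_le hξc with rfl | hlt
      · exact Or.inl hcF
      · exact Or.inr (Set.mem_biUnion hcF ⟨hlt, le_trans (le_max_right _ _) hρξ⟩)
    apply Set.Finite.subset _ hcover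
    apply hFfin.union
    apply hFfin.biUnion
    intro c hc
    exact IH c (hsub hc.1) (lt_trans (hsub hc.1) hβ) n

end Aux

section Aux2

variable (C : Ordinal → Set Ordinal)
    (hC : ∀ β : Ordinal, 0 < β → β < omega1 →
      C β ⊆ Set.Iio β ∧ (0 : Ordinal) ∈ C β ∧
      (∀ γ < β, ∃ x ∈ C β, γ ≤ x) ∧ (∀ γ < β, (C β ∩ Set.Iio γ).Finite))
    (ρ : Ordinal → Ordinal → ℕ)
    (hρrec : ∀ α β : Ordinal, α < β → β < omega1 →
      ρ α β = max (C β ∩ Set.Iio α).ncard (ρ α (sInf (C β \ Set.Iio α))))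

include hC hρrec in
lemma aux_coh : ∀ β' : Ordinal, β' < omega1 → ∀ β ≤ β',
    {ξ | ξ < β ∧ ρ ξ β ≠ ρ ξ β'}.Finite := by
  intro β'
  induction β' using Ordinal.induction with
  | h β' IH =>
    intro hβ' β hββ'
    rcases eq_or_lt_of_le hββ' with rfl | hlt
    · convert Set.finite_empty using 1
      ext ξ; simp
    have hβ'0 : 0 < β' := lt_of_le_of_lt (zero_le : (0 : Ordinal) ≤ β) hlt
    obtain ⟨hsub, hzero, hcof, hfin⟩ := hC β' hβ'0 hβ'
    set F := C β' ∩ Set.Iio β with hFdef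
    have hFfin : F.Finite := hfin β hlt
    set m := F.ncard with hmdef
    have hneL : (C β' \ Set.Iio β).Nonempty := by
      obtain ⟨x, hx, hxβ⟩ := hcof β hlt
      exact ⟨x, hx, not_lt.2 hxβ⟩
    set lam := sInf (C β' \ Set.Iio β) with hlamdef
    have hlam : lam ∈ C β' \ Set.Iio β := csInf_mem hneL
    have hβlam : β ≤ lam := not_lt.1 hlam.2
    have hlamβ' : lam < β' := hsub hlam.1
    have hS1 : {ξ | ξ < β ∧ ρ ξ β ≠ ρ ξ lam}.Finite := by
      rcases eq_or_lt_of_le hβlam with heq | hblam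
      · convert Set.finite_empty using 1
        ext ξ; simp [← heq]
      · exact IH lam hlamβ' (hlamβ'.trans hβ') β hblam.le
    have hS2 : {ξ | ξ < lam ∧ ρ ξ lam ≤ m}.Finite :=
      aux_fin C hC ρ hρrec lam (hlamβ'.trans hβ') m
    have hcover : {ξ | ξ < β ∧ ρ ξ β ≠ ρ ξ β'} ⊆
        F ∪ (⋃ c ∈ F, ({ξ | ξ < c ∧ ρ ξ c ≠ ρ ξ β} ∪
            {ξ | ξ < c ∧ ρ ξ c ≤ (C β' ∩ Set.Iio c).ncard})) ∪
        {ξ | ξ < β ∧ ρ ξ β ≠ ρ ξ lam} ∪ {ξ | ξ < lam ∧ ρ ξ lam ≤ m} := by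
      rintro ξ ⟨hξβ, hne⟩
      by_cases hξC : ξ ∈ C β'
      · exact Or.inl (Or.inl (Or.inl ⟨hξC, hξβ⟩))
      obtain ⟨c, hcC, hξc, hcβ', hsets, hcdef, hρeq⟩ :=
        aux_step C hC ρ hρrec hβ' (hξβ.trans hlt)
      have hξltc : ξ < c := lt_of_le_of_ne hξc (fun h => hξC (h ▸ hcC))
      by_cases hcβ : c < β
      · -- c ∈ F
        have hcF : c ∈ F := ⟨hcC, hcβ⟩
        by_cases h1 : ρ ξ c ≠ ρ ξ β
        · exact Or.inl (Or.inl (Or.inr (Set.mem_biUnion hcF (Or.inl ⟨hξltc, h1⟩))))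
        by_cases h2 : ρ ξ c ≤ (C β' ∩ Set.Iio c).ncard
        · exact Or.inl (Or.inl (Or.inr (Set.mem_biUnion hcF (Or.inr ⟨hξltc, h2⟩))))
        push_neg at h1 h2
        exfalso
        apply hne
        rw [hρeq, max_eq_right h2.le, h1]
      · -- c = lam
        push_neg at hcβ
        have hceq : c = lam := by
          rw [hcdef, hlamdef]
          congr 1
          ext x
          constructor
          · rintro ⟨hx1, hx2⟩
            refine ⟨hx1, fun hxβ => ?_⟩
            have : c ≤ x := hcdef ▸ csInf_le (OrderBot.bddBelow _)
              (show x ∈ C β' \ Set.Iio ξ from ⟨hx1, hx2⟩)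
            exact absurd (lt_of_lt_of_le hxβ hcβ) (not_lt.2 this)
          · rintro ⟨hx1, hx2⟩
            exact ⟨hx1, fun hxξ => hx2 (hxξ.trans hξβ)⟩
        have hFc : C β' ∩ Set.Iio c = F := by
          rw [hFdef]
          ext x
          constructor
          · rintro ⟨hx1, hx2⟩
            refine ⟨hx1, ?_⟩
            by_contra hxβ
            have : lam ≤ x := csInf_le (OrderBot.bddBelow _)
              (show x ∈ C β' \ Set.Iio β from ⟨hx1, hxβ⟩)
            exact absurd (hceq ▸ hx2) (not_lt.2 this)
          · rintro ⟨hx1, hx2⟩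
            exact ⟨hx1, lt_of_lt_of_le hx2 (hceq ▸ hβlam : β ≤ c)⟩
        rw [hFc, ← hmdef, hceq] at hρeq
        rw [hceq] at hξltc
        by_cases h1 : ρ ξ β ≠ ρ ξ lam
        · exact Or.inl (Or.inr ⟨hξβ, h1⟩)
        by_cases h2 : ρ ξ lam ≤ m
        · exact Or.inr ⟨hξltc, h2⟩
        push_neg at h1 h2
        exfalso
        apply hne
        rw [hρeq, max_eq_right h2.le, h1]
    apply Set.Finite.subset _ hcover
    apply Set.Finite.union
    apply Set.Finite.union
    apply Set.Finite.union hFfin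
    · apply hFfin.biUnion
      intro c hc
      apply Set.Finite.union
      · exact IH β hlt (hlt.trans hβ') c hc.2.le
      · exact aux_fin C hC ρ hρrec c ((hsub hc.1).trans hβ') _
    · exact hS1
    · exact hS2

end Aux2


/-- **Fact (Todorcevic).** Let `⟨C_α : α < ω₁⟩` be a C-sequence, let `ρ₁` be the
associated maximal weight function (characterized by its defining recursion), and
set `e_β(α) = ρ₁(α,β)`.  Then `⟨e_β : β < ω₁⟩` is a coherent sequence of
finite-to-one functions: each `e_β : β → ω` is finite-to-one, and for all
`β ≤ β' < ω₁` the set `{ξ < β : e_β(ξ) ≠ e_{β'}(ξ)}` is finite. -/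


theorem statement7
    (C : Ordinal → Set Ordinal)
    (hC : ∀ β : Ordinal, 0 < β → β < omega1 →
      C β ⊆ Set.Iio β ∧ (0 : Ordinal) ∈ C β ∧
      (∀ γ < β, ∃ x ∈ C β, γ ≤ x) ∧ (∀ γ < β, (C β ∩ Set.Iio γ).Finite))
    (ρ : Ordinal → Ordinal → ℕ)
    -- the defining recursion of the maximal weight: `ρ₁(α,α) = 0` and, for `α < β`,
    -- `ρ₁(α,β) = max (|C_β ∩ α|, ρ₁(α, min (C_β \ α)))`:
    (hρ0 : ∀ α : Ordinal, ρ α α = 0)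
    (hρrec : ∀ α β : Ordinal, α < β → β < omega1 →
      ρ α β = max (C β ∩ Set.Iio α).ncard (ρ α (sInf (C β \ Set.Iio α)))) :
    (∀ β < omega1, ∀ n : ℕ, {ξ | ξ < β ∧ ρ ξ β = n}.Finite) ∧
    (∀ β β' : Ordinal, β ≤ β' → β' < omega1 →
      {ξ | ξ < β ∧ ρ ξ β ≠ ρ ξ β'}.Finite) := by
  constructor
  · intro β hβ n
    apply Set.Finite.subset (aux_fin C hC ρ hρrec β hβ n)
    rintro ξ ⟨h1, h2⟩
    exact ⟨h1, h2.le⟩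
  · intro β β' hββ' hβ'
    exact aux_coh C hC ρ hρrec β' hβ' β hββ'
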